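/- Fix integers N ≥ 1 and T ≥ 1 with N·T ≥ 3, and a learning rate η > 0. Let f_1, f_2, … : {1,…,N} → [0,1] be loss functions taking values in [0,1] and run the MW¹ recursion with mixing parameter γ = 1/T. Then for any rounds t0 ≤ t1 with t1 − t0 + 1 ≤ T, the distributions q_t satisfy: Σ_{t=t0}^{t1} Σ_{x=1}^{N} q_t(x)·f_t(x) − min_{x∈{1,…,N}} Σ_{t=t0}^{t1} f_t(x) ≤ (2·log(N·T))/η + η·T. -/

import Mathlib

open Finset

lemma exp_neg_le_quad (z : ℝ) (hz : 0 ≤ z) :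
    Real.exp (-z) ≤ 1 - z + (3/4) * z ^ 2 := by
  have h2 : z/2 + 1 ≤ Real.exp (z/2) := Real.add_one_le_exp _
  have h3 : Real.exp z = Real.exp (z/2) * Real.exp (z/2) := by
    rw [← Real.exp_add]; ring_nf
  have h1 : (1 + z/2) ^ 2 ≤ Real.exp z := by nlinarith [Real.exp_pos (z/2)]
  have hp : (0:ℝ) < (1 + z/2) ^ 2 := by positivity
  rw [Real.exp_neg, inv_eq_one_div]
  have h5 : (1:ℝ)/Real.exp z ≤ 1/((1 + z/2)^2) :=
    one_div_le_one_div_of_le hp h1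
  refine h5.trans ?_
  rw [div_le_iff₀ hp]
  nlinarith [pow_nonneg hz 3, pow_nonneg hz 4]

set_option maxHeartbeats 2000000 in
theorem mw1_regret_bound
    (N T : ℕ) (hN : 1 ≤ N) (hT : 1 ≤ T) (hNT : 3 ≤ N * T)
    (η : ℝ) (hη : 0 < η)
    (f : ℕ → Fin N → ℝ) (hf : ∀ t x, f t x ∈ Set.Icc (0 : ℝ) 1)
    (w : ℕ → Fin N → ℝ)
    (hw1 : ∀ x, w 1 x = 1)
    (hwrec : ∀ t, 1 ≤ t → ∀ x,
      w (t + 1) x = w t x * Real.exp (-(η * f t x))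
        + ((1 / (T : ℝ)) / (N : ℝ)) * ∑ y, w t y)
    (q : ℕ → Fin N → ℝ)
    (hq : ∀ t x, q t x = w t x / ∑ y, w t y)
    (t0 t1 : ℕ) (ht0 : 1 ≤ t0) (ht01 : t0 ≤ t1) (hlen : t1 - t0 + 1 ≤ T) :
    (∑ t ∈ Icc t0 t1, ∑ x, q t x * f t x)
      - (univ.inf' (univ_nonempty_iff.mpr ⟨⟨0, hN⟩⟩)
          fun x => ∑ t ∈ Icc t0 t1, f t x)
    ≤ 2 * Real.log ((N : ℝ) * (T : ℝ)) / η + η * (T : ℝ) := by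
  have hT1 : (1:ℝ) ≤ (T:ℝ) := by exact_mod_cast hT
  have hTpos : (0:ℝ) < (T:ℝ) := by linarith
  have hN1 : (1:ℝ) ≤ (N:ℝ) := by exact_mod_cast hN
  have hNpos : (0:ℝ) < (N:ℝ) := by linarith
  have hNne : (N:ℝ) ≠ 0 := ne_of_gt hNpos
  have hTne : (T:ℝ) ≠ 0 := ne_of_gt hTpos
  have hNT3 : (3:ℝ) ≤ (N:ℝ)*(T:ℝ) := by exact_mod_cast hNT
  have hNTpos : (0:ℝ) < (N:ℝ)*(T:ℝ) := by linarith
  set L := Real.log ((N:ℝ)*(T:ℝ)) with hLdef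
  have hL1 : 1 ≤ L := by
    rw [hLdef, Real.le_log_iff_exp_le hNTpos]
    have := Real.exp_one_lt_d9
    linarith
  -- positivity of weights
  have hwpos : ∀ t, 1 ≤ t → ∀ x, 0 < w t x := by
    intro t ht
    induction t, ht using Nat.le_induction with
    | base => intro x; rw [hw1]; norm_num
    | succ t ht ih =>
      intro x
      rw [hwrec t ht x]
      have hW : 0 < ∑ y, w t y :=
        Finset.sum_pos (fun y _ => ih y) ⟨⟨0, hN⟩, Finset.mem_univ _⟩
      have h1 : 0 < w t x * Real.exp (-(η * f t x)) :=
        mul_pos (ih x) (Real.exp_pos _)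
      have h2 : 0 < (1/(T:ℝ))/(N:ℝ) * ∑ y, w t y :=
        mul_pos (by positivity) hW
      linarith
  have hWpos : ∀ t, 1 ≤ t → 0 < ∑ y, w t y := fun t ht =>
    Finset.sum_pos (fun y _ => hwpos t ht y) ⟨⟨0, hN⟩, Finset.mem_univ _⟩
  have hqsum : ∀ t, 1 ≤ t → ∑ x, q t x = 1 := by
    intro t ht
    simp only [hq]
    rw [← Finset.sum_div, div_self (ne_of_gt (hWpos t ht))]
  -- per-round potential drop
  have hstep : ∀ t, 1 ≤ t →
      Real.log (∑ y, w (t+1) y) ≤ Real.log (∑ y, w t y)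
        - η * (∑ x, q t x * f t x) + (3/4)*η^2 + 1/(T:ℝ) := by
    intro t ht
    have hW : 0 < ∑ y, w t y := hWpos t ht
    have hW1 : 0 < ∑ y, w (t+1) y := hWpos (t+1) (by omega)
    have hsum : ∑ y, w (t+1) y
        = (∑ y, w t y * Real.exp (-(η * f t y))) + (1/(T:ℝ)) * ∑ y, w t y := by
      calc ∑ y, w (t+1) y
          = ∑ y, (w t y * Real.exp (-(η * f t y))
              + ((1/(T:ℝ))/(N:ℝ)) * ∑ z, w t z) :=
            Finset.sum_congr rfl fun y _ => hwrec t ht y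
        _ = (∑ y, w t y * Real.exp (-(η * f t y)))
              + (N:ℝ) * (((1/(T:ℝ))/(N:ℝ)) * ∑ z, w t z) := by
            rw [Finset.sum_add_distrib, Finset.sum_const, Finset.card_univ,
              Fintype.card_fin, nsmul_eq_mul]
        _ = _ := by field_simp
    have hub : ∑ y, w t y * Real.exp (-(η * f t y))
        ≤ (∑ y, w t y) - η * (∑ y, w t y * f t y) + (3/4)*η^2 * ∑ y, w t y := by
      have hper : ∀ y ∈ (univ : Finset (Fin N)),
          w t y * Real.exp (-(η * f t y)) ≤ w t y * (1 - η * f t y + (3/4)*η^2) := by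
        intro y _
        have hf0 := (hf t y).1
        have hf1 := (hf t y).2
        have he := exp_neg_le_quad (η * f t y) (by positivity)
        have hwy := (hwpos t ht y).le
        have hq2 : (η * f t y)^2 ≤ η^2 := by
          have hf2 : (f t y)^2 ≤ 1 := by nlinarith
          calc (η * f t y)^2 = η^2 * (f t y)^2 := by ring
            _ ≤ η^2 * 1 := mul_le_mul_of_nonneg_left hf2 (sq_nonneg η)
            _ = η^2 := mul_one _
        have : Real.exp (-(η * f t y)) ≤ 1 - η * f t y + (3/4)*η^2 := by nlinarith
        exact mul_le_mul_of_nonneg_left this hwy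
      calc ∑ y, w t y * Real.exp (-(η * f t y))
          ≤ ∑ y, w t y * (1 - η * f t y + (3/4)*η^2) := Finset.sum_le_sum hper
        _ = (∑ y, w t y) - η * (∑ y, w t y * f t y) + (3/4)*η^2 * ∑ y, w t y := by
            rw [Finset.mul_sum, Finset.mul_sum, ← Finset.sum_sub_distrib,
              ← Finset.sum_add_distrib]
            exact Finset.sum_congr rfl fun y _ => by ring
    have hqf : ∑ x, q t x * f t x = (∑ y, w t y * f t y) / ∑ y, w t y := by
      rw [Finset.sum_div]
      exact Finset.sum_congr rfl fun x _ => by rw [hq t x, div_mul_eq_mul_div]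
    have hratio := Real.log_le_sub_one_of_pos (div_pos hW1 hW)
    rw [Real.log_div (ne_of_gt hW1) (ne_of_gt hW)] at hratio
    have hfin : (∑ y, w (t+1) y) / (∑ y, w t y) - 1
        ≤ - (η * ∑ x, q t x * f t x) + (3/4)*η^2 + 1/(T:ℝ) := by
      rw [hqf, sub_le_iff_le_add, div_le_iff₀ hW, hsum]
      have hexpand : (-(η * ((∑ y, w t y * f t y) / ∑ y, w t y)) + 3/4*η^2 + 1/(T:ℝ) + 1)
            * ∑ y, w t y
          = -(η * (∑ y, w t y * f t y)) + (3/4)*η^2 * (∑ y, w t y)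
            + (1/(T:ℝ)) * (∑ y, w t y) + ∑ y, w t y := by
        field_simp
      rw [hexpand]
      linarith
    linarith
  -- telescoped potential drop
  have hsumlog : ∀ m : ℕ,
      Real.log (∑ y, w (t0+m) y) ≤ Real.log (∑ y, w t0 y)
        - η * (∑ t ∈ Finset.Ico t0 (t0+m), ∑ x, q t x * f t x)
        + (m:ℝ) * ((3/4)*η^2 + 1/(T:ℝ)) := by
    intro m
    induction m with
    | zero => simp
    | succ m ih =>
      have h1 := hstep (t0+m) (by omega)
      have h2 : t0 + (m+1) = (t0+m)+1 := rfl
      rw [h2, Finset.sum_Ico_succ_top (by omega : t0 ≤ t0+m)]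
      push_cast
      linarith
  -- lower bound on a single weight
  have hlow : ∀ x, ∀ m : ℕ,
      w t0 x * Real.exp (-(η * ∑ t ∈ Finset.Ico t0 (t0+m), f t x)) ≤ w (t0+m) x := by
    intro x m
    induction m with
    | zero => simp
    | succ m ih =>
      have ht0m : 1 ≤ t0 + m := by omega
      have h4 : (w t0 x * Real.exp (-(η * ∑ t ∈ Finset.Ico t0 (t0+m), f t x)))
            * Real.exp (-(η * f (t0+m) x))
          ≤ w (t0+m) x * Real.exp (-(η * f (t0+m) x)) :=
        mul_le_mul_of_nonneg_right ih (Real.exp_pos _).le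
      have h1 : w t0 x * Real.exp (-(η * ∑ t ∈ Finset.Ico t0 (t0+(m+1)), f t x))
          = (w t0 x * Real.exp (-(η * ∑ t ∈ Finset.Ico t0 (t0+m), f t x)))
            * Real.exp (-(η * f (t0+m) x)) := by
        rw [mul_assoc, ← Real.exp_add]
        congr 2
        rw [show t0+(m+1) = (t0+m)+1 from rfl,
          Finset.sum_Ico_succ_top (by omega : t0 ≤ t0+m)]
        ring
      have h3 : 0 ≤ (1/(T:ℝ))/(N:ℝ) * ∑ y, w (t0+m) y :=
        (mul_pos (by positivity) (hWpos _ ht0m)).le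
      have h5 : w (t0+(m+1)) x
          = w (t0+m) x * Real.exp (-(η * f (t0+m) x))
            + (1/(T:ℝ))/(N:ℝ) * ∑ y, w (t0+m) y := hwrec (t0+m) ht0m x
      rw [h1, h5]
      linarith
  -- initialization: lower bound on q t0
  have hqlow : ∀ x, (1/(T:ℝ)) / ((N:ℝ) * (1 + 1/(T:ℝ))) ≤ q t0 x := by
    intro x
    rcases eq_or_lt_of_le ht0 with h | h
    · rw [hq, ← h]
      have hs : ∑ y, w 1 y = (N:ℝ) := by
        simp [hw1, Finset.card_univ]
      rw [hs, hw1]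
      rw [div_le_div_iff₀ (by positivity) (by positivity)]
      have h0 : (0:ℝ) < 1/(T:ℝ) := by positivity
      nlinarith
    · obtain ⟨s, rfl⟩ : ∃ s, t0 = s + 1 := ⟨t0 - 1, by omega⟩
      have hs : 1 ≤ s := by omega
      have hWs : 0 < ∑ y, w s y := hWpos s hs
      have hwl : (1/(T:ℝ))/(N:ℝ) * ∑ y, w s y ≤ w (s+1) x := by
        rw [hwrec s hs x]
        linarith [(mul_pos (hwpos s hs x) (Real.exp_pos (-(η * f s x)))).le]
      have hWu : ∑ y, w (s+1) y ≤ (1 + 1/(T:ℝ)) * ∑ y, w s y := by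
        have hper : ∀ y ∈ (univ : Finset (Fin N)),
            w (s+1) y ≤ w s y + (1/(T:ℝ))/(N:ℝ) * ∑ z, w s z := by
          intro y _
          rw [hwrec s hs y]
          have he1 : Real.exp (-(η * f s y)) ≤ 1 := by
            rw [Real.exp_le_one_iff]
            have h0 := (hf s y).1
            have : 0 ≤ η * f s y := mul_nonneg hη.le h0
            linarith
          have h2 : w s y * Real.exp (-(η * f s y)) ≤ w s y * 1 :=
            mul_le_mul_of_nonneg_left he1 (hwpos s hs y).le
          linarith
        calc ∑ y, w (s+1) y
            ≤ ∑ y, (w s y + (1/(T:ℝ))/(N:ℝ) * ∑ z, w s z) := Finset.sum_le_sum hper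
          _ = (∑ y, w s y) + (N:ℝ) * ((1/(T:ℝ))/(N:ℝ) * ∑ z, w s z) := by
              rw [Finset.sum_add_distrib, Finset.sum_const, Finset.card_univ,
                Fintype.card_fin, nsmul_eq_mul]
          _ = (1 + 1/(T:ℝ)) * ∑ y, w s y := by field_simp
      rw [hq]
      have hgen : ∀ Ws : ℝ, 0 < Ws → (1/(T:ℝ)) / ((N:ℝ) * (1 + 1/(T:ℝ)))
          = ((1/(T:ℝ))/(N:ℝ) * Ws) / ((1 + 1/(T:ℝ)) * Ws) := by
        intro Ws hWs'
        rw [eq_div_iff (by positivity)]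
        field_simp
      rw [hgen (∑ y, w s y) hWs]
      exact div_le_div₀ (hwpos (s+1) (by omega) x).le hwl (hWpos (s+1) (by omega)) hWu
  -- log of initialization
  have hxlog : ∀ x, -Real.log (q t0 x) ≤ L + 1/(T:ℝ) := by
    intro x
    have h0 : (0:ℝ) < (1/(T:ℝ)) / ((N:ℝ) * (1 + 1/(T:ℝ))) := by positivity
    have h1 := Real.log_le_log h0 (hqlow x)
    have h2 : (1/(T:ℝ)) / ((N:ℝ) * (1 + 1/(T:ℝ)))
        = ((N:ℝ)*(T:ℝ)*(1 + 1/(T:ℝ)))⁻¹ := by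
      field_simp
    rw [h2, Real.log_inv, Real.log_mul (by positivity) (by positivity)] at h1
    have h4 : Real.log (1 + 1/(T:ℝ)) ≤ 1/(T:ℝ) := by
      have := Real.log_le_sub_one_of_pos (show (0:ℝ) < 1 + 1/(T:ℝ) by positivity)
      linarith
    rw [← hLdef] at h1
    linarith
  -- set up the minimizer
  obtain ⟨xm, _, hxm⟩ := Finset.exists_mem_eq_inf'
    (univ_nonempty_iff.mpr ⟨(⟨0, hN⟩ : Fin N)⟩) (fun x => ∑ t ∈ Icc t0 t1, f t x)
  rw [hxm]
  set m : ℕ := t1 + 1 - t0 with hmdef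
  have hm : t0 + m = t1 + 1 := by omega
  have hmT : (m:ℝ) ≤ (T:ℝ) := by
    have : m ≤ T := by omega
    exact_mod_cast this
  set R : ℝ := (∑ t ∈ Icc t0 t1, ∑ x, q t x * f t x) - ∑ t ∈ Icc t0 t1, f t xm with hRdef
  -- key inequality
  have hkey : η * R ≤ L + 1/(T:ℝ) + (m:ℝ) * ((3/4)*η^2 + 1/(T:ℝ)) := by
    have h5 := hsumlog m
    have h6 := hlow xm m
    have h7 : w (t0+m) xm ≤ ∑ y, w (t0+m) y :=
      Finset.single_le_sum (fun y _ => (hwpos (t0+m) (by omega) y).le) (Finset.mem_univ xm)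
    have h8 : Real.log (w t0 xm) - η * (∑ t ∈ Finset.Ico t0 (t0+m), f t xm)
        ≤ Real.log (∑ y, w (t0+m) y) := by
      have hpos : 0 < w t0 xm * Real.exp (-(η * ∑ t ∈ Finset.Ico t0 (t0+m), f t xm)) :=
        mul_pos (hwpos t0 ht0 xm) (Real.exp_pos _)
      have := Real.log_le_log hpos (h6.trans h7)
      rwa [Real.log_mul (ne_of_gt (hwpos t0 ht0 xm)) (Real.exp_ne_zero _),
        Real.log_exp] at this
    have h9 : Real.log (∑ y, w t0 y) - Real.log (w t0 xm) = -Real.log (q t0 xm) := by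
      rw [hq, Real.log_div (ne_of_gt (hwpos t0 ht0 xm)) (ne_of_gt (hWpos t0 ht0))]
      ring
    have h10 := hxlog xm
    rw [hm, Finset.Ico_add_one_right_eq_Icc] at h5 h6 h8
    rw [hRdef]
    linarith
  by_cases hcase : 1 + 1/(T:ℝ) ≤ L + η^2*(T:ℝ)/4
  · -- MW branch
    have hstep2 : (m:ℝ) * ((3/4)*η^2 + 1/(T:ℝ)) ≤ (3/4)*η^2*(T:ℝ) + 1 := by
      have h1 : (m:ℝ) * (1/(T:ℝ)) ≤ 1 := by
        rw [mul_one_div, div_le_one hTpos]; exact hmT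
      nlinarith [sq_nonneg η, Nat.cast_nonneg (α := ℝ) m]
    have hreg : η * R ≤ 2*L + η^2*(T:ℝ) := by nlinarith [hkey]
    have h2 : 2*L/η + η*(T:ℝ) = (2*L + η^2*(T:ℝ))/η := by
      field_simp
    rw [h2, le_div_iff₀ hη]
    nlinarith [hreg]
  · -- trivial branch
    push_neg at hcase
    have h1 : η^2*(T:ℝ)/4 < 1/(T:ℝ) := by linarith
    have h2 : η^2*(T:ℝ)^2 < 4 := by
      have h1T : (1/(T:ℝ))*(T:ℝ) = 1 := by field_simp
      nlinarith [mul_lt_mul_of_pos_right h1 hTpos]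
    have h3 : η*(T:ℝ) ≤ 2 := by
      nlinarith [mul_pos hη hTpos, sq_nonneg (η*(T:ℝ) - 2)]
    have hR1 : ∑ t ∈ Icc t0 t1, ∑ x, q t x * f t x ≤ (m:ℝ) := by
      have hper : ∀ t ∈ Icc t0 t1, ∑ x, q t x * f t x ≤ 1 := by
        intro t ht
        have ht' : 1 ≤ t := le_trans ht0 (Finset.mem_Icc.mp ht).1
        calc ∑ x, q t x * f t x ≤ ∑ x, q t x := by
              apply Finset.sum_le_sum
              intro x _
              have := (hf t x).2
              have := (hf t x).1
              have hqx : 0 < q t x := by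
                rw [hq]; exact div_pos (hwpos t ht' x) (hWpos t ht')
              nlinarith
          _ = 1 := hqsum t ht'
      calc ∑ t ∈ Icc t0 t1, ∑ x, q t x * f t x ≤ ∑ t ∈ Icc t0 t1, (1:ℝ) :=
            Finset.sum_le_sum hper
        _ = (m:ℝ) := by
            rw [Finset.sum_const, Nat.card_Icc, nsmul_eq_mul, mul_one]
    have hR2 : 0 ≤ ∑ t ∈ Icc t0 t1, f t xm :=
      Finset.sum_nonneg fun t _ => (hf t xm).1
    have h4 : (T:ℝ) ≤ 2*L/η := by
      rw [le_div_iff₀ hη]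
      nlinarith
    have h5 : 0 ≤ η*(T:ℝ) := (mul_pos hη hTpos).le
    rw [hRdef]
    linarith
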